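/- If N is a flow network of external dimension 2 with one input arc a₁ and one output arc a₂, then a total typing T is the principal typing of some network with these boundary arcs iff there exist 0 ≤ r ≤ s with T(∅) = T({a₁,a₂}) = [0,0], T({a₁}) = [r,s] and T({a₂}) = [−s,−r]; moreover any such T is realized by a one-node network. -/

import Mathlib

open Finset

namespace FlowTyping

noncomputable section

/-- A typing assigns (optionally) a closed interval `[r, s]` (encoded as a pair)
to subsets of the input/output arcs. -/
abbrev Typing (ι : Type*) := Finset ι → Option (ℝ × ℝ)

variable {ι : Type*} [Fintype ι] [DecidableEq ι]

/-- `theta isIn A f` = sum of `f` over the input arcs in `A` minus the sum of `f`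
over the output arcs in `A`. -/
def theta (isIn : ι → Bool) (A : Finset ι) (f : ι → ℝ) : ℝ :=
  ∑ a ∈ A, (if isIn a then f a else - f a)

/-- An IO assignment (a nonnegative function on the input/output arcs) satisfies a
typing `T` if for every subset `A` where `T A` is defined, `theta A f ∈ T A`. -/
def Satisfies (isIn : ι → Bool) (T : Typing ι) (f : ι → ℝ) : Prop :=
  (∀ a, 0 ≤ f a) ∧
    ∀ A r s, T A = some (r, s) → r ≤ theta isIn A f ∧ theta isIn A f ≤ s

/-- The polytope of all IO assignments satisfying the typing `T`. -/
def Poly (isIn : ι → Bool) (T : Typing ι) : Set (ι → ℝ) := {f | Satisfies isIn T f}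

/-- Well-formedness: every assigned interval is a genuine interval `[r, s]`, `r ≤ s`. -/
def WF (T : Typing ι) : Prop := ∀ A r s, T A = some (r, s) → r ≤ s

/-- A typing is total if it is defined on every subset of the input/output arcs. -/
def TotalT (T : Typing ι) : Prop := ∀ A, (T A).isSome

/-- A typing is tight if every value of every assigned interval is attained on the
polytope `Poly T`. -/
def Tight (isIn : ι → Bool) (T : Typing ι) : Prop :=
  ∀ A r s, T A = some (r, s) → ∀ x, r ≤ x → x ≤ s →
    ∃ f ∈ Poly isIn T, theta isIn A f = x

/-- A flow network: a finite set of nodes `V`, a finite set of internal arcs `E`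
(each with a source and a target node), input/output arcs indexed by `ι`
(each attached to a node; `isIn a` tells whether `a` is an input arc), and
lower/upper capacities on all arcs. -/
structure Network (ι : Type*) (isIn : ι → Bool) where
  V : Type
  E : Type
  [fintV : Fintype V]
  [fintE : Fintype E]
  [decV : DecidableEq V]
  src : E → V
  tgt : E → V
  ioNode : ι → V
  lcE : E → ℝ
  ucE : E → ℝ
  lcIO : ι → ℝ
  ucIO : ι → ℝ
  lcE_nonneg : ∀ e, 0 ≤ lcE e
  lcE_le_ucE : ∀ e, lcE e ≤ ucE e
  lcIO_nonneg : ∀ a, 0 ≤ lcIO a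
  lcIO_le_ucIO : ∀ a, lcIO a ≤ ucIO a

attribute [instance] Network.fintV Network.fintE Network.decV

variable {isIn : ι → Bool}

/-- `f` (on the io arcs) together with `g` (on the internal arcs) is a feasible
flow: capacity constraints on every arc, and flow conservation at every node. -/
def Network.Feasible (N : Network ι isIn) (f : ι → ℝ) (g : N.E → ℝ) : Prop :=
  (∀ a, N.lcIO a ≤ f a ∧ f a ≤ N.ucIO a) ∧
  (∀ e, N.lcE e ≤ g e ∧ g e ≤ N.ucE e) ∧
  ∀ v : N.V,
    ((∑ e : N.E, if N.tgt e = v then g e else 0) +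
        ∑ a : ι, if N.ioNode a = v ∧ isIn a then f a else 0) =
      ((∑ e : N.E, if N.src e = v then g e else 0) +
        ∑ a : ι, if N.ioNode a = v ∧ ¬ isIn a then f a else 0)

/-- A typing is sound for `N` if every IO assignment satisfying it extends to a
feasible flow in `N`. -/
def Sound (N : Network ι isIn) (T : Typing ι) : Prop :=
  ∀ f ∈ Poly isIn T, ∃ g : N.E → ℝ, N.Feasible f g

/-- A typing is complete for `N` if every feasible flow of `N` (restricted to the
io arcs) satisfies it. -/
def Complete (N : Network ι isIn) (T : Typing ι) : Prop :=
  ∀ f g, N.Feasible f g → Satisfies isIn T f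

/-- Undirected adjacency of nodes via internal arcs. -/
def NAdj (N : Network ι isIn) (v w : N.V) : Prop :=
  ∃ e : N.E, (N.src e = v ∧ N.tgt e = w) ∨ (N.src e = w ∧ N.tgt e = v)

/-- Two io arcs belong to the same (connected) component of the network. -/
def SameComp (N : Network ι isIn) (a b : ι) : Prop :=
  Relation.ReflTransGen (NAdj N) (N.ioNode a) (N.ioNode b)

/-- `T` is locally total for `N`: it is defined on every set of io arcs lying in a
single component, and undefined on every union of two nonempty sets of io arcs
from two distinct components. -/
def LocallyTotal (N : Network ι isIn) (T : Typing ι) : Prop :=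
  (∀ B : Finset ι, (∀ a ∈ B, ∀ b ∈ B, SameComp N a b) → (T B).isSome) ∧
  (∀ B B' : Finset ι, B.Nonempty → B'.Nonempty →
    (∀ a ∈ B, ∀ b ∈ B, SameComp N a b) →
    (∀ a ∈ B', ∀ b ∈ B', SameComp N a b) →
    (∀ a ∈ B, ∀ b ∈ B', ¬ SameComp N a b) → T (B ∪ B') = none)

/-- Principal typing: locally total, tight (and well-formed), sound and complete. -/
def PrincipalFor (N : Network ι isIn) (T : Typing ι) : Prop :=
  WF T ∧ LocallyTotal N T ∧ Tight isIn T ∧ Sound N T ∧ Complete N T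

/-- A principal typing over a fixed arc set: tight, total (well-formed), and
sound-and-complete for some network with that boundary. -/
def IsPrincipal {ι : Type*} [Fintype ι] [DecidableEq ι]
    (isIn : ι → Bool) (T : Typing ι) : Prop :=
  WF T ∧ TotalT T ∧ Tight isIn T ∧
    ∃ N : Network ι isIn, Sound N T ∧ Complete N T

/-- Boundary of external dimension 2: arc `0` is the input arc, arc `1` the
output arc. -/
def io2 : Fin 2 → Bool := fun a => decide (a = 0)

lemma finset_fin2_cases : ∀ A : Finset (Fin 2),
    A = ∅ ∨ A = {0} ∨ A = {1} ∨ A = Finset.univ := by decide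

lemma theta_empty (f : Fin 2 → ℝ) : theta io2 ∅ f = 0 := by simp [theta]

lemma theta_zero (f : Fin 2 → ℝ) : theta io2 {0} f = f 0 := by
  simp [theta, io2]

lemma theta_one (f : Fin 2 → ℝ) : theta io2 {1} f = - f 1 := by
  simp [theta, io2]

lemma theta_univ (f : Fin 2 → ℝ) : theta io2 Finset.univ f = f 0 - f 1 := by
  simp [theta, io2, Fin.sum_univ_two]
  ring

lemma sum_indicator_tgt {V E : Type} [Fintype V] [DecidableEq V] [Fintype E]
    (t : E → V) (g : E → ℝ) :
    ∑ v : V, ∑ e : E, (if t e = v then g e else 0) = ∑ e : E, g e := by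
  rw [Finset.sum_comm]
  simp

lemma sum_indicator_io {V : Type} [Fintype V] [DecidableEq V]
    (n : Fin 2 → V) (P : Fin 2 → Prop) [DecidablePred P] (f : Fin 2 → ℝ) :
    ∑ v : V, ∑ a : Fin 2, (if n a = v ∧ P a then f a else 0) =
      ∑ a : Fin 2, (if P a then f a else 0) := by
  rw [Finset.sum_comm]
  refine Finset.sum_congr rfl fun a _ => ?_
  simp [ite_and]

lemma feasible_balance (N : Network (Fin 2) io2) (f : Fin 2 → ℝ) (g : N.E → ℝ)
    (h : N.Feasible f g) : f 0 = f 1 := by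
  have hc : ∑ v : N.V, ((∑ e : N.E, if N.tgt e = v then g e else 0) +
        ∑ a : Fin 2, if N.ioNode a = v ∧ io2 a then f a else 0)
      = ∑ v : N.V, ((∑ e : N.E, if N.src e = v then g e else 0) +
        ∑ a : Fin 2, if N.ioNode a = v ∧ ¬ io2 a then f a else 0) :=
    Finset.sum_congr rfl fun v _ => h.2.2 v
  rw [Finset.sum_add_distrib, Finset.sum_add_distrib,
      sum_indicator_tgt, sum_indicator_tgt,
      sum_indicator_io, sum_indicator_io] at hc
  have hc' := add_left_cancel hc
  simpa [Fin.sum_univ_two, io2] using hc'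

/-- The one-node network with input arc `0` and output arc `1`, both with
capacities `[r, s]`. -/
def oneNode (r s : ℝ) (h0 : 0 ≤ r) (hrs : r ≤ s) : Network (Fin 2) io2 where
  V := Unit
  E := Empty
  src := fun e => e.elim
  tgt := fun e => e.elim
  ioNode := fun _ => ()
  lcE := fun e => e.elim
  ucE := fun e => e.elim
  lcIO := fun _ => r
  ucIO := fun _ => s
  lcE_nonneg := fun e => e.elim
  lcE_le_ucE := fun e => e.elim
  lcIO_nonneg := fun _ => h0
  lcIO_le_ucIO := fun _ => hrs

lemma mem_poly_of_two (T : Typing (Fin 2)) (r s : ℝ)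
    (hE : T ∅ = some (0, 0)) (hU : T Finset.univ = some (0, 0))
    (hA : T {0} = some (r, s)) (hB : T {1} = some (-s, -r))
    (x : ℝ) (hrx : r ≤ x) (hxs : x ≤ s) (h0 : 0 ≤ r) :
    (fun _ => x) ∈ Poly io2 T := by
  refine ⟨fun a => le_trans h0 hrx, ?_⟩
  intro A r' s' hTA
  rcases finset_fin2_cases A with h | h | h | h <;> subst h
  · rw [hE] at hTA
    simp only [Option.some.injEq, Prod.mk.injEq] at hTA
    obtain ⟨rfl, rfl⟩ := hTA
    rw [theta_empty]
    exact ⟨le_rfl, le_rfl⟩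
  · rw [hA] at hTA
    simp only [Option.some.injEq, Prod.mk.injEq] at hTA
    obtain ⟨rfl, rfl⟩ := hTA
    rw [theta_zero]
    exact ⟨hrx, hxs⟩
  · rw [hB] at hTA
    simp only [Option.some.injEq, Prod.mk.injEq] at hTA
    obtain ⟨rfl, rfl⟩ := hTA
    rw [theta_one]
    exact ⟨by show -s ≤ -x; linarith, by show -x ≤ -r; linarith⟩
  · rw [hU] at hTA
    simp only [Option.some.injEq, Prod.mk.injEq] at hTA
    obtain ⟨rfl, rfl⟩ := hTA
    rw [theta_univ]
    exact ⟨by show (0:ℝ) ≤ x - x; linarith, by show x - x ≤ (0:ℝ); linarith⟩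

lemma sound_complete_oneNode (T : Typing (Fin 2)) (r s : ℝ)
    (h0 : 0 ≤ r) (hrs : r ≤ s)
    (hE : T ∅ = some (0, 0)) (hU : T Finset.univ = some (0, 0))
    (hA : T {0} = some (r, s)) (hB : T {1} = some (-s, -r)) :
    Sound (oneNode r s h0 hrs) T ∧ Complete (oneNode r s h0 hrs) T := by
  constructor
  · intro f hf
    obtain ⟨hpos, hsat⟩ := hf
    have h1 := hsat {0} r s hA
    rw [theta_zero] at h1
    have h2 := hsat {1} (-s) (-r) hB
    rw [theta_one] at h2
    have h3 := hsat Finset.univ 0 0 hU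
    rw [theta_univ] at h3
    refine ⟨fun e => e.elim, ?_, fun e => e.elim, ?_⟩
    · intro a
      show r ≤ f a ∧ f a ≤ s
      fin_cases a
      · exact h1
      · show r ≤ f 1 ∧ f 1 ≤ s
        exact ⟨by linarith [h2.2], by linarith [h2.1]⟩
    · intro v
      have hbal : f 0 = f 1 := by linarith [h3.1, h3.2]
      simp [oneNode, Fin.sum_univ_two, io2, hbal, eq_iff_true_of_subsingleton]
      congr 1
  · intro f g hfg
    have hbal : f 0 = f 1 := feasible_balance _ f g hfg
    have hcap := hfg.1
    have hc0 : r ≤ f 0 ∧ f 0 ≤ s := hcap 0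
    have hc1 : r ≤ f 1 ∧ f 1 ≤ s := hcap 1
    refine ⟨?_, ?_⟩
    · intro a
      show 0 ≤ f a
      fin_cases a
      · exact le_trans h0 hc0.1
      · exact le_trans h0 hc1.1
    · intro A r' s' hTA
      rcases finset_fin2_cases A with h | h | h | h <;> subst h
      · rw [hE] at hTA
        simp only [Option.some.injEq, Prod.mk.injEq] at hTA
        obtain ⟨rfl, rfl⟩ := hTA
        rw [theta_empty]
        exact ⟨le_rfl, le_rfl⟩
      · rw [hA] at hTA
        simp only [Option.some.injEq, Prod.mk.injEq] at hTA
        obtain ⟨rfl, rfl⟩ := hTA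
        rw [theta_zero]
        exact hc0
      · rw [hB] at hTA
        simp only [Option.some.injEq, Prod.mk.injEq] at hTA
        obtain ⟨rfl, rfl⟩ := hTA
        rw [theta_one]
        exact ⟨by linarith [hc1.2], by linarith [hc1.1]⟩
      · rw [hU] at hTA
        simp only [Option.some.injEq, Prod.mk.injEq] at hTA
        obtain ⟨rfl, rfl⟩ := hTA
        rw [theta_univ, hbal]
        simp

/-- A total typing `T` over one input arc `a₁ = 0` and one output
arc `a₂ = 1` is the principal typing of some network iff there are `0 ≤ r ≤ s`
with `T ∅ = T {a₁,a₂} = [0,0]`, `T {a₁} = [r,s]` and `T {a₂} = [−s,−r]`; moreover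
any such `T` is realized by a one-node network. -/
theorem dim2_principal_characterization (T : Typing (Fin 2)) (hTot : TotalT T) :
    (IsPrincipal io2 T ↔
      ∃ r s : ℝ, 0 ≤ r ∧ r ≤ s ∧
        T ∅ = some (0, 0) ∧ T Finset.univ = some (0, 0) ∧
        T {0} = some (r, s) ∧ T {1} = some (-s, -r)) ∧
    (∀ r s : ℝ, 0 ≤ r → r ≤ s →
      T ∅ = some (0, 0) → T Finset.univ = some (0, 0) →
      T {0} = some (r, s) → T {1} = some (-s, -r) →
      ∃ N : Network (Fin 2) io2, Nonempty N.V ∧ Subsingleton N.V ∧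
        IsEmpty N.E ∧ Sound N T ∧ Complete N T) := by
  constructor
  · constructor
    · -- forward direction
      rintro ⟨hWF, _, hTight, N, hSound, _⟩
      obtain ⟨⟨rE, sE⟩, hE⟩ := Option.isSome_iff_exists.mp (hTot ∅)
      obtain ⟨⟨rU, sU⟩, hU⟩ := Option.isSome_iff_exists.mp (hTot Finset.univ)
      obtain ⟨⟨r, s⟩, hA⟩ := Option.isSome_iff_exists.mp (hTot {0})
      obtain ⟨⟨p, q⟩, hB⟩ := Option.isSome_iff_exists.mp (hTot {1})
      have hrE : rE = 0 := by
        obtain ⟨f, _, hth⟩ := hTight ∅ rE sE hE rE le_rfl (hWF _ _ _ hE)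
        rw [theta_empty] at hth; linarith
      have hsE : sE = 0 := by
        obtain ⟨f, _, hth⟩ := hTight ∅ rE sE hE sE (hWF _ _ _ hE) le_rfl
        rw [theta_empty] at hth; linarith
      have huniv : ∀ x, rU ≤ x → x ≤ sU → x = 0 := by
        intro x h1 h2
        obtain ⟨f, hf, hth⟩ := hTight Finset.univ rU sU hU x h1 h2
        obtain ⟨g, hfg⟩ := hSound f hf
        have hbal := feasible_balance N f g hfg
        rw [theta_univ] at hth; linarith
      have hrU : rU = 0 := huniv rU le_rfl (hWF _ _ _ hU)
      have hsU : sU = 0 := huniv sU (hWF _ _ _ hU) le_rfl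
      have hrs : r ≤ s := hWF _ _ _ hA
      have hpq : p ≤ q := hWF _ _ _ hB
      have h0r : 0 ≤ r := by
        obtain ⟨f, hf, hth⟩ := hTight {0} r s hA r le_rfl hrs
        rw [theta_zero] at hth
        linarith [hf.1 0]
      have key : ∀ f ∈ Poly io2 T,
          f 0 = f 1 ∧ (r ≤ f 0 ∧ f 0 ≤ s) ∧ (p ≤ -(f 1) ∧ -(f 1) ≤ q) := by
        intro f hf
        have h3 := hf.2 Finset.univ rU sU hU
        rw [theta_univ] at h3
        have h1 := hf.2 {0} r s hA
        rw [theta_zero] at h1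
        have h2 := hf.2 {1} p q hB
        rw [theta_one] at h2
        exact ⟨by linarith [h3.1, h3.2], h1, h2⟩
      have hps : p = -s := by
        have hle : -s ≤ p := by
          obtain ⟨f, hf, hth⟩ := hTight {1} p q hB p le_rfl hpq
          rw [theta_one] at hth
          obtain ⟨heq, h1, _⟩ := key f hf
          linarith [h1.2]
        have hge : p ≤ -s := by
          obtain ⟨f, hf, hth⟩ := hTight {0} r s hA s hrs le_rfl
          rw [theta_zero] at hth
          obtain ⟨heq, _, h2⟩ := key f hf
          linarith [h2.1]
        linarith
      have hqr : q = -r := by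
        have hle : -r ≤ q := by
          obtain ⟨f, hf, hth⟩ := hTight {0} r s hA r le_rfl hrs
          rw [theta_zero] at hth
          obtain ⟨heq, _, h2⟩ := key f hf
          linarith [h2.2]
        have hge : q ≤ -r := by
          obtain ⟨f, hf, hth⟩ := hTight {1} p q hB q hpq le_rfl
          rw [theta_one] at hth
          obtain ⟨heq, h1, _⟩ := key f hf
          linarith [h1.1]
        linarith
      exact ⟨r, s, h0r, hrs, by rw [hE, hrE, hsE], by rw [hU, hrU, hsU], hA,
        by rw [hB, hps, hqr]⟩
    · -- backward direction
      rintro ⟨r, s, h0, hrs, hE, hU, hA, hB⟩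
      obtain ⟨hS, hC⟩ := sound_complete_oneNode T r s h0 hrs hE hU hA hB
      refine ⟨?_, hTot, ?_, oneNode r s h0 hrs, hS, hC⟩
      · intro A r' s' hTA
        rcases finset_fin2_cases A with h | h | h | h <;> subst h
        · rw [hE] at hTA; simp only [Option.some.injEq, Prod.mk.injEq] at hTA; linarith [hTA.1, hTA.2]
        · rw [hA] at hTA; simp only [Option.some.injEq, Prod.mk.injEq] at hTA; linarith [hTA.1, hTA.2]
        · rw [hB] at hTA; simp only [Option.some.injEq, Prod.mk.injEq] at hTA; linarith [hTA.1, hTA.2]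
        · rw [hU] at hTA; simp only [Option.some.injEq, Prod.mk.injEq] at hTA; linarith [hTA.1, hTA.2]
      · intro A r' s' hTA x hrx hxs
        rcases finset_fin2_cases A with h | h | h | h <;> subst h
        · rw [hE] at hTA; simp only [Option.some.injEq, Prod.mk.injEq] at hTA
          refine ⟨fun _ => r, mem_poly_of_two T r s hE hU hA hB r le_rfl hrs h0, ?_⟩
          rw [theta_empty]; linarith [hTA.1, hTA.2]
        · rw [hA] at hTA; simp only [Option.some.injEq, Prod.mk.injEq] at hTA
          obtain ⟨h1, h2⟩ := hTA
          refine ⟨fun _ => x, mem_poly_of_two T r s hE hU hA hB x (by linarith)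
            (by linarith) h0, ?_⟩
          rw [theta_zero]
        · rw [hB] at hTA; simp only [Option.some.injEq, Prod.mk.injEq] at hTA
          obtain ⟨h1, h2⟩ := hTA
          refine ⟨fun _ => -x, mem_poly_of_two T r s hE hU hA hB (-x) (by linarith)
            (by linarith) h0, ?_⟩
          rw [theta_one]; simp
        · rw [hU] at hTA; simp only [Option.some.injEq, Prod.mk.injEq] at hTA
          refine ⟨fun _ => r, mem_poly_of_two T r s hE hU hA hB r le_rfl hrs h0, ?_⟩
          rw [theta_univ]; simp; linarith [hTA.1, hTA.2]
  · intro r s h0 hrs hE hU hA hB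
    obtain ⟨hS, hC⟩ := sound_complete_oneNode T r s h0 hrs hE hU hA hB
    exact ⟨oneNode r s h0 hrs, ⟨()⟩, ⟨fun a b => rfl⟩, ⟨fun e => e.elim⟩, hS, hC⟩

end
end FlowTyping
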